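/- Let F and B be n × n column-stochastic matrices, let 0 < α₁, α₂, α₃ < 1, and for d ∈ ℝⁿ let R(d) denote the unique solution t of the RepRank equation t = α₁ F P₊(t) + α₂ B P₋(t) + α₃ d. Then R is a bijection from ℝⁿ onto ℝⁿ. -/
import Mathlib


open Finset Filter

/-- Replace negative components by zero. -/
def Ppos {n : ℕ} (t : Fin n → ℝ) : Fin n → ℝ := fun i => max (t i) 0

/-- Replace positive components by zero. -/
def Pneg {n : ℕ} (t : Fin n → ℝ) : Fin n → ℝ := fun i => min (t i) 0

/-- ℓ¹ norm on ℝⁿ. -/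
def l1 {n : ℕ} (x : Fin n → ℝ) : ℝ := ∑ i, |x i|

/-- A matrix is column-stochastic if entries are nonnegative and each column sums to 1. -/
def ColStochastic {n : ℕ} (F : Matrix (Fin n) (Fin n) ℝ) : Prop :=
  (∀ i j, 0 ≤ F i j) ∧ ∀ j, ∑ i, F i j = 1

lemma l1_nonneg {n : ℕ} (x : Fin n → ℝ) : 0 ≤ l1 x :=
  Finset.sum_nonneg fun _ _ => abs_nonneg _

lemma abs_ppos_pneg (a b : ℝ) :
    |max a 0 - max b 0| + |min a 0 - min b 0| = |a - b| := by
  rcases le_total a 0 with ha | ha <;> rcases le_total b 0 with hb | hb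
  · rw [max_eq_right ha, max_eq_right hb, min_eq_left ha, min_eq_left hb]; simp
  · rw [max_eq_right ha, max_eq_left hb, min_eq_left ha, min_eq_right hb]
    rw [zero_sub, sub_zero, abs_neg, abs_of_nonneg hb, abs_of_nonpos ha,
      abs_of_nonpos (by linarith : a - b ≤ 0)]; ring
  · rw [max_eq_left ha, max_eq_right hb, min_eq_right ha, min_eq_left hb]
    rw [sub_zero, zero_sub, abs_neg, abs_of_nonneg ha, abs_of_nonpos hb,
      abs_of_nonneg (by linarith : 0 ≤ a - b)]; ring
  · rw [max_eq_left ha, max_eq_left hb, min_eq_right ha, min_eq_right hb]; simp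

lemma l1_mulVec_le {n : ℕ} {F : Matrix (Fin n) (Fin n) ℝ} (hF : ColStochastic F)
    (x : Fin n → ℝ) : l1 (F.mulVec x) ≤ l1 x := by
  unfold l1
  calc ∑ i, |F.mulVec x i| ≤ ∑ i, ∑ j, |F i j * x j| := by
        refine Finset.sum_le_sum fun i _ => ?_
        simpa [Matrix.mulVec, dotProduct] using
          Finset.abs_sum_le_sum_abs (fun j => F i j * x j) Finset.univ
    _ = ∑ j, (∑ i, F i j) * |x j| := by
        rw [Finset.sum_comm]
        refine Finset.sum_congr rfl fun j _ => ?_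
        rw [Finset.sum_mul]
        refine Finset.sum_congr rfl fun i _ => ?_
        rw [abs_mul, abs_of_nonneg (hF.1 i j)]
    _ = ∑ j, |x j| := by
        refine Finset.sum_congr rfl fun j _ => ?_
        rw [hF.2 j, one_mul]

theorem repRank_bijective {n : ℕ} (F B : Matrix (Fin n) (Fin n) ℝ)
    (hF : ColStochastic F) (hB : ColStochastic B)
    (α₁ α₂ α₃ : ℝ) (hα₁ : 0 < α₁) (hα₁' : α₁ < 1) (hα₂ : 0 < α₂) (hα₂' : α₂ < 1)
    (hα₃ : 0 < α₃) (hα₃' : α₃ < 1)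
    (R : (Fin n → ℝ) → (Fin n → ℝ))
    (hR : ∀ d, R d = α₁ • F.mulVec (Ppos (R d)) + α₂ • B.mulVec (Pneg (R d)) + α₃ • d) :
    Function.Bijective R := by
  set g : (Fin n → ℝ) → (Fin n → ℝ) :=
    fun t => α₃⁻¹ • (t - α₁ • F.mulVec (Ppos t) - α₂ • B.mulVec (Pneg t)) with hg
  -- g is injective (contraction argument in ℓ¹)
  have hinj : Function.Injective g := by
    intro t s hts
    have h1 : t - α₁ • F.mulVec (Ppos t) - α₂ • B.mulVec (Pneg t)
        = s - α₁ • F.mulVec (Ppos s) - α₂ • B.mulVec (Pneg s) := by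
      have h := congrArg (fun v => α₃ • v) hts
      simpa [hg, smul_smul, mul_inv_cancel₀ (ne_of_gt hα₃)] using h
    have h2 : t - s = α₁ • F.mulVec (Ppos t - Ppos s) + α₂ • B.mulVec (Pneg t - Pneg s) := by
      rw [Matrix.mulVec_sub, Matrix.mulVec_sub]
      funext i
      have := congrFun h1 i
      simp only [Pi.sub_apply, Pi.add_apply, Pi.smul_apply, smul_eq_mul] at this ⊢
      linarith
    set a := l1 (Ppos t - Ppos s) with hadef
    set b := l1 (Pneg t - Pneg s) with hbdef
    have hab : a + b = l1 (t - s) := by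
      rw [hadef, hbdef]
      unfold l1
      rw [← Finset.sum_add_distrib]
      refine Finset.sum_congr rfl fun i _ => ?_
      simp only [Pi.sub_apply, Ppos, Pneg]
      exact abs_ppos_pneg (t i) (s i)
    have hle : l1 (t - s) ≤ α₁ * a + α₂ * b := by
      rw [h2]
      calc l1 (α₁ • F.mulVec (Ppos t - Ppos s) + α₂ • B.mulVec (Pneg t - Pneg s))
          ≤ α₁ * l1 (F.mulVec (Ppos t - Ppos s)) + α₂ * l1 (B.mulVec (Pneg t - Pneg s)) := by
            unfold l1
            rw [Finset.mul_sum, Finset.mul_sum, ← Finset.sum_add_distrib]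
            refine Finset.sum_le_sum fun i _ => ?_
            simp only [Pi.add_apply, Pi.smul_apply, smul_eq_mul]
            calc |α₁ * F.mulVec (Ppos t - Ppos s) i + α₂ * B.mulVec (Pneg t - Pneg s) i|
                ≤ |α₁ * F.mulVec (Ppos t - Ppos s) i| + |α₂ * B.mulVec (Pneg t - Pneg s) i| :=
                  abs_add_le _ _
              _ = α₁ * |F.mulVec (Ppos t - Ppos s) i| + α₂ * |B.mulVec (Pneg t - Pneg s) i| := by
                  rw [abs_mul, abs_mul, abs_of_pos hα₁, abs_of_pos hα₂]
        _ ≤ α₁ * a + α₂ * b :=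
            add_le_add (mul_le_mul_of_nonneg_left (l1_mulVec_le hF _) hα₁.le)
              (mul_le_mul_of_nonneg_left (l1_mulVec_le hB _) hα₂.le)
    have ha0 : 0 ≤ a := l1_nonneg _
    have hb0 : 0 ≤ b := l1_nonneg _
    have haz : a ≤ 0 := by nlinarith [mul_nonneg (sub_nonneg.mpr hα₂'.le) hb0]
    have hbz : b ≤ 0 := by nlinarith [mul_nonneg (sub_nonneg.mpr hα₁'.le) ha0]
    have hL0 : l1 (t - s) = 0 := by
      rw [← hab, le_antisymm haz ha0, le_antisymm hbz hb0, add_zero]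
    funext i
    have hzero : ∀ j ∈ Finset.univ, |(t - s) j| = 0 :=
      (Finset.sum_eq_zero_iff_of_nonneg fun j _ => abs_nonneg _).mp hL0
    have := hzero i (Finset.mem_univ i)
    have : t i - s i = 0 := by simpa [abs_eq_zero] using this
    linarith
  -- g is a left inverse of R
  have hfix : ∀ d, g (R d) = d := by
    intro d
    have h : R d - α₁ • F.mulVec (Ppos (R d)) - α₂ • B.mulVec (Pneg (R d)) = α₃ • d := by
      nth_rewrite 1 [hR d]; abel
    rw [hg]
    simp only [h, smul_smul, inv_mul_cancel₀ (ne_of_gt hα₃), one_smul]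
  constructor
  · intro x y hxy
    have := congrArg g hxy
    rwa [hfix, hfix] at this
  · intro t
    exact ⟨g t, hinj (by rw [hfix])⟩
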